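/- Let $R$ be a one-dimensional Gorenstein local ring with ideals $I=(x)$, $J=(y)$ satisfying $xy=0$, $I\cap J=(0)$, and $I+J=\mathfrak{m}$. Then $\mathfrak{m}^2 = (x^2,y^2) = (x+y)\mathfrak{m}$, and the embedding dimension and multiplicity of $R$ are both 2 (assuming $R$ is not a DVR). -/

import Mathlib

open IsLocalRing TrivSqZeroExt Filter

section Preamble

/-- For an `S`-algebra `A`, the dual `Hom_S(A, S)` is an `A`-module via
`(a • f) b = f (a * b)`. -/
instance dualSMul {S A : Type*} [CommRing S] [CommRing A] [Algebra S A] :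
    SMul A (A →ₗ[S] S) :=
  ⟨fun a f => f ∘ₗ LinearMap.mul S A a⟩

instance dualModule {S A : Type*} [CommRing S] [CommRing A] [Algebra S A] :
    Module A (A →ₗ[S] S) where
  smul := (· • ·)
  one_smul f := by ext x; simp [HSMul.hSMul, SMul.smul]
  mul_smul a b f := by ext x; simp [HSMul.hSMul, SMul.smul, mul_assoc, mul_left_comm]
  smul_zero a := rfl
  smul_add a f g := rfl
  add_smul a b f := by ext x; simp [HSMul.hSMul, SMul.smul, add_mul]
  zero_smul f := by ext x; simp [HSMul.hSMul, SMul.smul]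

/-- The minimal number of generators of a module. -/
noncomputable def minGens (A : Type*) [Semiring A] (M : Type*) [AddCommMonoid M]
    [Module A M] : ℕ :=
  sInf {n | ∃ s : Finset M, s.card = n ∧ Submodule.span A (s : Set M) = ⊤}

/-- The minimal number of generators of an ideal. -/
noncomputable def muIdeal {A : Type*} [CommRing A] (I : Ideal A) : ℕ :=
  sInf {n | ∃ s : Finset A, s.card = n ∧ Ideal.span (s : Set A) = I}

/-- The length of a module, as the Krull dimension of its submodule lattice
(`ℕ`-valued; infinite length is sent to `0` by `toNat`, which is irrelevant in
the finite-length situations where it is used). -/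
noncomputable def moduleLength (A : Type*) [CommRing A] (M : Type*) [AddCommGroup M]
    [Module A M] : ℕ :=
  ((Order.krullDim (Submodule A M)).unbotD 0).toNat

/-- `HasHSMultiplicity A 𝔪 M s e` says that the Hilbert–Samuel multiplicity
`e⁰_𝔪(M) = lim s! · ℓ(M/𝔪^{n+1}M)/nˢ` exists and equals `e`. -/
def HasHSMultiplicity (A : Type*) [CommRing A] (𝔪 : Ideal A) (M : Type*)
    [AddCommGroup M] [Module A M] (s e : ℕ) : Prop :=
  Tendsto (fun n : ℕ =>
      (Nat.factorial s : ℝ) *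
        (moduleLength A (M ⧸ ((𝔪 ^ (n + 1)) • (⊤ : Submodule A M))) : ℝ) / (n : ℝ) ^ s)
    atTop (nhds (e : ℝ))

/-- A Cohen–Macaulay local ring: a Noetherian local ring possessing a regular
sequence of nonunits whose length is the Krull dimension. -/
def IsCohenMacaulayLocalRing (A : Type*) [CommRing A] : Prop :=
  IsLocalRing A ∧ IsNoetherianRing A ∧
    ∃ (n : ℕ) (x : Fin n → A), ringKrullDim A = n ∧ (∀ i, ¬IsUnit (x i)) ∧
      RingTheory.Sequence.IsRegular A (List.ofFn x)

/-- A Gorenstein local ring: a Noetherian local ring possessing a regular system of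
parameters-length regular sequence of nonunits generating an irreducible ideal. -/
def IsGorensteinLocalRing (A : Type*) [CommRing A] : Prop :=
  IsLocalRing A ∧ IsNoetherianRing A ∧
    ∃ (n : ℕ) (x : Fin n → A), ringKrullDim A = n ∧ (∀ i, ¬IsUnit (x i)) ∧
      RingTheory.Sequence.IsRegular A (List.ofFn x) ∧
      InfIrred (Ideal.span (Set.range x))

/-- A regular local ring: a Noetherian local ring whose maximal ideal is generated by
`dim` elements. -/
def IsRegularLocalRing' (A : Type*) [CommRing A] : Prop :=
  IsLocalRing A ∧ IsNoetherianRing A ∧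
    ∃ (n : ℕ) (x : Fin n → A), ringKrullDim A = n ∧ (∀ i, ¬IsUnit (x i)) ∧
      (∀ a : A, ¬IsUnit a → a ∈ Ideal.span (Set.range x))

universe u v

/-- A witness that `K` is a canonical module of `A`: a Gorenstein local ring `S` with
`A` a module-finite `S`-algebra of the same dimension, and `K ≅ Hom_S(A, S)` as
`A`-modules. -/
structure CanonicalModuleWitness (A : Type u) [CommRing A] (K : Type v)
    [AddCommGroup K] [Module A K] where
  S : Type u
  [ringS : CommRing S]
  [algS : Algebra S A]
  gorenstein : IsGorensteinLocalRing S
  finite : Module.Finite S A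
  dimEq : ringKrullDim S = ringKrullDim A
  equiv : K ≃ₗ[A] (A →ₗ[S] S)

/-- `K` is a canonical module of `A`. -/
def IsCanonicalModule (A : Type u) [CommRing A] (K : Type v) [AddCommGroup K]
    [Module A K] : Prop :=
  Nonempty (CanonicalModuleWitness A K)

/-- A witness to the almost Gorenstein property: an embedding `A ↪ K_A` into a
canonical module whose cokernel `C` is zero or an Ulrich module
(`μ_A(C) = e⁰_𝔪(C)`, computed with `s = d - 1`). -/
structure AGLWitness (A : Type u) [CommRing A] [IsLocalRing A] where
  K : Type u
  [addK : AddCommGroup K]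
  [modK : Module A K]
  canonical : IsCanonicalModule A K
  emb : A →ₗ[A] K
  inj : Function.Injective emb
  ulrich : Subsingleton (K ⧸ LinearMap.range emb) ∨
    ∃ d e : ℕ, ringKrullDim A = (d : ℕ) ∧
      minGens A (K ⧸ LinearMap.range emb) = e ∧
      HasHSMultiplicity A (maximalIdeal A) (K ⧸ LinearMap.range emb) (d - 1) e

/-- An almost Gorenstein local ring in the sense of Goto–Takahashi–Taniguchi. -/
def IsAlmostGorensteinLocalRing (A : Type u) [CommRing A] : Prop :=
  IsCohenMacaulayLocalRing A ∧ ∃ h : IsLocalRing A, Nonempty (@AGLWitness A _ h)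

/-- A presentation of `R` as a homomorphic image of a regular local ring. -/
structure RegularPresentation (R : Type u) [CommRing R] where
  S : Type u
  [ringS : CommRing S]
  regular : IsRegularLocalRing' S
  π : S →+* R
  surj : Function.Surjective π

/-- `R` is a homomorphic image of a regular local ring. -/
def IsQuotientOfRegularLocal (R : Type u) [CommRing R] : Prop :=
  Nonempty (RegularPresentation R)

/-- A presentation `R ≅ S/[(X) ∩ (Y)]` with `S` regular local of dimension `d + 1`,
`X, Y` part of a regular system of parameters of `S`, and `I` the image of `(X)`. -/
structure GoodPresentation (R : Type u) [CommRing R] (I : Ideal R) (d : ℕ) where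
  S : Type u
  [ringS : CommRing S]
  regular : IsRegularLocalRing' S
  dimS : ringKrullDim S = (d + 1 : ℕ)
  X : S
  Y : S
  partOfRSOP : ∃ z : Fin (d - 1) → S,
    (∀ a ∈ ({X, Y} : Set S) ∪ Set.range z, ¬IsUnit a) ∧
    (∀ a : S, ¬IsUnit a → a ∈ Ideal.span (({X, Y} : Set S) ∪ Set.range z))
  equiv : (S ⧸ (Ideal.span {X} ⊓ Ideal.span {Y})) ≃+* R
  imageI : I = Ideal.span {equiv (Ideal.Quotient.mk _ X)}

end Preamble

section Aux

variable {R : Type*} [CommRing R]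

lemma aux_span_helper (a b c : R) (h : a ∈ Ideal.span {c}) :
    Ideal.span {a, b} ⊔ Ideal.span {c} = Ideal.span ({c, b} : Set R) := by
  apply le_antisymm
  · apply sup_le
    · rw [Ideal.span_le]
      rintro r (rfl | rfl)
      · exact Ideal.span_mono (by simp) h
      · exact Ideal.subset_span (by simp)
    · rw [Ideal.span_le]
      rintro r (rfl : r = c)
      exact Ideal.subset_span (by simp)
  · rw [Ideal.span_le]
    rintro r (rfl | rfl)
    · exact le_sup_right (α := Ideal R) (Ideal.subset_span rfl)
    · exact le_sup_left (α := Ideal R) (Ideal.subset_span (by simp))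

/-- The distinguished chain of ideals between `𝔪^{n+1}` and `R`. -/
def auxC (x y : R) (n k : ℕ) : Ideal R :=
  Ideal.span {x ^ (n + 1 - (k + 1) / 2), y ^ (n + 1 - k / 2)}

/-- The extra generator at step `k`. -/
def auxZ (x y : R) (n k : ℕ) : R :=
  if k % 2 = 0 then x ^ (n - k / 2) else y ^ (n - k / 2)

end Aux
section Aux2

variable {R : Type*} [CommRing R]

lemma auxC_succ (x y : R) (hxy : x * y = 0) (n k : ℕ) (hk : k ≤ 2 * n) :
    auxC x y n (k + 1) = auxC x y n k ⊔ Ideal.span {auxZ x y n k} ∧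
      x * auxZ x y n k ∈ auxC x y n k ∧ y * auxZ x y n k ∈ auxC x y n k := by
  rcases Nat.even_or_odd k with ⟨q, hq⟩ | ⟨q, hq⟩
  · -- k = 2q
    have hq' : q ≤ n := by omega
    have h1 : n + 1 - (k + 1) / 2 = n + 1 - q := by omega
    have h2 : n + 1 - k / 2 = n + 1 - q := by omega
    have h3 : n + 1 - (k + 1 + 1) / 2 = n - q := by omega
    have h5 : k % 2 = 0 := by omega
    have h6 : k / 2 = q := by omega
    have hz : auxZ x y n k = x ^ (n - q) := by rw [auxZ, h6, if_pos h5]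
    have hpow : x ^ (n + 1 - q) = x ^ (n - q) * x := by
      rw [← pow_succ]; congr 1; omega
    refine ⟨?_, ?_, ?_⟩
    · rw [auxC, auxC, h3, h1, h2, hz]
      exact (aux_span_helper _ _ _ (Ideal.mem_span_singleton.2 ⟨x, hpow⟩)).symm
    · rw [auxC, h1, h2, hz]
      exact Ideal.subset_span (by rw [mul_comm, ← hpow]; simp)
    · rw [auxC, h1, h2, hz]
      rcases Nat.eq_or_lt_of_le hq' with rfl | hlt
      · have : y * x ^ (q - q) = y ^ (q + 1 - q) := by
          simp [Nat.sub_self, show q + 1 - q = 1 by omega]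
        rw [this]; exact Ideal.subset_span (by simp)
      · have hxx : x ^ (n - q) = x ^ (n - q - 1) * x := by
          rw [← pow_succ]; congr 1; omega
        have h0 : y * x ^ (n - q) = 0 := by
          calc y * x ^ (n - q) = x ^ (n - q - 1) * (x * y) := by rw [hxx]; ring
          _ = 0 := by rw [hxy, mul_zero]
        rw [h0]; exact zero_mem _
  · -- k = 2q + 1
    have hq' : q < n := by omega
    have h1 : n + 1 - (k + 1) / 2 = n - q := by omega
    have h2 : n + 1 - k / 2 = n + 1 - q := by omega
    have h3 : n + 1 - (k + 1 + 1) / 2 = n - q := by omega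
    have h5 : ¬ (k % 2 = 0) := by omega
    have h6 : k / 2 = q := by omega
    have hz : auxZ x y n k = y ^ (n - q) := by rw [auxZ, h6, if_neg h5]
    have hpow : y ^ (n + 1 - q) = y ^ (n - q) * y := by
      rw [← pow_succ]; congr 1; omega
    refine ⟨?_, ?_, ?_⟩
    · rw [auxC, auxC, h3, h1, h2, hz]
      rw [show Ideal.span {x ^ (n - q), y ^ (n + 1 - q)} =
            Ideal.span {y ^ (n + 1 - q), x ^ (n - q)} from Ideal.span_pair_comm,
        aux_span_helper _ _ _ (Ideal.mem_span_singleton.2 ⟨y, hpow⟩)]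
      exact Ideal.span_pair_comm
    · rw [auxC, h1, h2, hz]
      have hyy : y ^ (n - q) = y ^ (n - q - 1) * y := by
        rw [← pow_succ]; congr 1; omega
      have h0 : x * y ^ (n - q) = 0 := by
        calc x * y ^ (n - q) = y ^ (n - q - 1) * (x * y) := by rw [hyy]; ring
        _ = 0 := by rw [hxy, mul_zero]
      rw [h0]; exact zero_mem _
    · rw [auxC, h1, h2, hz]
      exact Ideal.subset_span (by rw [mul_comm, ← hpow]; simp)

end Aux2
section Aux3

variable {R : Type*} [CommRing R] [IsLocalRing R]

lemma aux_L1 (x y : R) (hx : x ∈ maximalIdeal R)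
    (hmeet : Ideal.span {x} ⊓ Ideal.span {y} = ⊥)
    (hxpow : ∀ i : ℕ, x ^ (i + 1) ≠ 0) (i j : ℕ) :
    x ^ (i + 1) ∉ Ideal.span ({x ^ (i + 2), y ^ (j + 1)} : Set R) := by
  intro hmem
  obtain ⟨a, b, hab⟩ := Ideal.mem_span_pair.1 hmem
  have key : x ^ (i + 1) * (1 - a * x) = b * y ^ (j + 1) := by
    rw [pow_succ x (i + 1)] at hab; ring_nf; ring_nf at hab; linear_combination -hab
  have hb : b * y ^ (j + 1) ∈ Ideal.span {x} ⊓ Ideal.span {y} := by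
    constructor
    · rw [← key]
      exact Ideal.mem_span_singleton.2 ⟨x ^ i * (1 - a * x), by ring⟩
    · exact Ideal.mem_span_singleton.2 ⟨b * y ^ j, by ring⟩
  rw [hmeet, Ideal.mem_bot] at hb
  have hz : x ^ (i + 1) * (1 - a * x) = 0 := by rw [key, hb]
  have hu : IsUnit (1 - a * x) :=
    IsLocalRing.isUnit_one_sub_self_of_mem_nonunits _
      (IsLocalRing.mem_maximalIdeal _ |>.1 ((maximalIdeal R).mul_mem_left a hx))
  exact hxpow i ((IsUnit.mul_left_eq_zero hu).1 hz)

lemma aux_L2 (x y : R) (hy : y ∈ maximalIdeal R)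
    (hmeet : Ideal.span {x} ⊓ Ideal.span {y} = ⊥)
    (hypow : ∀ j : ℕ, y ^ (j + 1) ≠ 0) (i j : ℕ) :
    y ^ (j + 1) ∉ Ideal.span ({x ^ (i + 1), y ^ (j + 2)} : Set R) := by
  intro hmem
  obtain ⟨a, b, hab⟩ := Ideal.mem_span_pair.1 hmem
  have key : y ^ (j + 1) * (1 - b * y) = a * x ^ (i + 1) := by
    rw [pow_succ y (j + 1)] at hab; linear_combination -hab
  have ha : a * x ^ (i + 1) ∈ Ideal.span {x} ⊓ Ideal.span {y} := by
    constructor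
    · exact Ideal.mem_span_singleton.2 ⟨a * x ^ i, by ring⟩
    · rw [← key]
      exact Ideal.mem_span_singleton.2 ⟨y ^ j * (1 - b * y), by ring⟩
  rw [hmeet, Ideal.mem_bot] at ha
  have hz : y ^ (j + 1) * (1 - b * y) = 0 := by rw [key, ha]
  have hu : IsUnit (1 - b * y) :=
    IsLocalRing.isUnit_one_sub_self_of_mem_nonunits _
      (IsLocalRing.mem_maximalIdeal _ |>.1 ((maximalIdeal R).mul_mem_left b hy))
  exact hypow j ((IsUnit.mul_left_eq_zero hu).1 hz)

lemma auxZ_not_mem (x y : R) (hx : x ∈ maximalIdeal R) (hy : y ∈ maximalIdeal R)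
    (hm : maximalIdeal R = Ideal.span {x, y})
    (hmeet : Ideal.span {x} ⊓ Ideal.span {y} = ⊥)
    (hxpow : ∀ i : ℕ, x ^ (i + 1) ≠ 0) (hypow : ∀ j : ℕ, y ^ (j + 1) ≠ 0)
    (n k : ℕ) (hk : k ≤ 2 * n) :
    auxZ x y n k ∉ auxC x y n k := by
  rcases Nat.even_or_odd k with ⟨q, hq⟩ | ⟨q, hq⟩
  · have hq' : q ≤ n := by omega
    have h1 : n + 1 - (k + 1) / 2 = n + 1 - q := by omega
    have h2 : n + 1 - k / 2 = n + 1 - q := by omega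
    have h6 : k / 2 = q := by omega
    have hz : auxZ x y n k = x ^ (n - q) := by rw [auxZ]; rw [h6, if_pos (by omega)]
    rw [auxC, h1, h2, hz]
    rcases Nat.eq_or_lt_of_le hq' with rfl | hlt
    · simp only [Nat.sub_self, pow_zero]
      intro h1mem
      have : maximalIdeal R = ⊤ := by
        rw [hm]
        rw [Ideal.eq_top_iff_one]
        have hle : Ideal.span ({x ^ (q + 1 - q), y ^ (q + 1 - q)} : Set R)
            ≤ Ideal.span {x, y} := by
          rw [Ideal.span_le]
          rintro r (rfl | rfl)
          · exact Ideal.pow_mem_of_mem _ (Ideal.subset_span (by simp)) _ (by omega)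
          · exact Ideal.pow_mem_of_mem _ (Ideal.subset_span (by simp)) _ (by omega)
        exact hle h1mem
      exact (Ideal.IsMaximal.ne_top (IsLocalRing.maximalIdeal.isMaximal R)) this
    · obtain ⟨i, hi⟩ : ∃ i, n - q = i + 1 := ⟨n - q - 1, by omega⟩
      have h7 : n + 1 - q = i + 2 := by omega
      rw [hi, h7]
      exact aux_L1 x y hx hmeet hxpow i (i + 1)
  · have hq' : q < n := by omega
    have h1 : n + 1 - (k + 1) / 2 = n - q := by omega
    have h2 : n + 1 - k / 2 = n + 1 - q := by omega
    have h6 : k / 2 = q := by omega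
    have hz : auxZ x y n k = y ^ (n - q) := by rw [auxZ]; rw [h6, if_neg (by omega)]
    rw [auxC, h1, h2, hz]
    obtain ⟨j, hj⟩ : ∃ j, n - q = j + 1 := ⟨n - q - 1, by omega⟩
    have h7 : n + 1 - q = j + 2 := by omega
    rw [hj, h7]
    exact aux_L2 x y hy hmeet hypow j j

end Aux3
section Aux4

variable {R : Type*} [CommRing R] [IsLocalRing R]

lemma aux_krullDim (x y : R) (hx : x ∈ maximalIdeal R) (hy : y ∈ maximalIdeal R)
    (hm : maximalIdeal R = Ideal.span {x, y}) (hxy : x * y = 0)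
    (hmeet : Ideal.span {x} ⊓ Ideal.span {y} = ⊥)
    (hxpow : ∀ i : ℕ, x ^ (i + 1) ≠ 0) (hypow : ∀ j : ℕ, y ^ (j + 1) ≠ 0)
    (n : ℕ) :
    Order.krullDim {J : Ideal R // auxC x y n 0 ≤ J} = ((2 * n + 1 : ℕ) : WithBot ℕ∞) := by
  classical
  have hstep := fun k hk => auxC_succ x y hxy n k hk
  have hmono : ∀ k, k ≤ 2 * n → auxC x y n k ≤ auxC x y n (k + 1) := by
    intro k hk
    rw [(hstep k hk).1]
    exact le_sup_left
  have hmono2 : ∀ j k, j ≤ k → k ≤ 2 * n + 1 → auxC x y n j ≤ auxC x y n k := by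
    intro j k
    induction k with
    | zero =>
      intro hjk _
      obtain rfl : j = 0 := Nat.le_zero.1 hjk
      exact le_rfl
    | succ k ih =>
      intro hjk hk
      rcases Nat.eq_or_lt_of_le hjk with rfl | h
      · exact le_rfl
      · exact (ih (by omega) (by omega)).trans (hmono k (by omega))
  have hCtop : auxC x y n (2 * n + 1) = ⊤ := by
    rw [auxC, show n + 1 - (2 * n + 1 + 1) / 2 = 0 from by omega, pow_zero]
    exact (Ideal.eq_top_iff_one _).2 (Ideal.subset_span (by simp))
  have hznotmem := fun k hk =>
    auxZ_not_mem x y hx hy hm hmeet hxpow hypow n k hk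
  have hzmem : ∀ k, k ≤ 2 * n → auxZ x y n k ∈ auxC x y n (k + 1) := by
    intro k hk
    rw [(hstep k hk).1]
    exact le_sup_right (α := Ideal R) (Ideal.mem_span_singleton_self _)
  -- the lower-bound chain
  let lb : LTSeries {J : Ideal R // auxC x y n 0 ≤ J} :=
    { length := 2 * n + 1
      toFun := fun i => ⟨auxC x y n i, hmono2 0 i (Nat.zero_le _) (by omega)⟩
      step := by
        intro i
        have hi : (i : ℕ) ≤ 2 * n := by omega
        show (_ : {J : Ideal R // auxC x y n 0 ≤ J}) < _
        rw [Subtype.mk_lt_mk]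
        simp only [Fin.coe_castSucc, Fin.val_succ]
        refine lt_of_le_of_ne (hmono i hi) fun heq => ?_
        exact hznotmem i hi (heq ▸ hzmem i hi) }
  -- the strictly monotone counting function
  set φ : {J : Ideal R // auxC x y n 0 ≤ J} → ℕ := fun J =>
    ((Finset.range (2 * n + 1)).filter
      (fun k => auxC x y n (k + 1) ≤ J.1 ⊔ auxC x y n k)).card with hφ
  have hφmono : StrictMono φ := by
    intro J₁ J₂ hlt
    have hle12 : J₁.1 ≤ J₂.1 := hlt.le
    apply Finset.card_lt_card
    rw [Finset.ssubset_iff_subset_ne]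
    constructor
    · intro k hk
      simp only [Finset.mem_filter] at hk ⊢
      exact ⟨hk.1, hk.2.trans (sup_le_sup_right hle12 _)⟩
    · intro heq
      have hiff : ∀ k, k < 2 * n + 1 →
          ((auxC x y n (k + 1) ≤ J₁.1 ⊔ auxC x y n k) ↔
            (auxC x y n (k + 1) ≤ J₂.1 ⊔ auxC x y n k)) := by
        intro k hk
        have := Finset.ext_iff.1 heq k
        simpa [Finset.mem_filter, Finset.mem_range, hk] using this
      have main : ∀ d, d ≤ 2 * n + 1 →
          J₁.1 ⊔ auxC x y n (2 * n + 1 - d) = J₂.1 ⊔ auxC x y n (2 * n + 1 - d) := by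
        intro d
        induction d with
        | zero => intro _; simp only [Nat.sub_zero, hCtop, sup_top_eq]
        | succ d ih =>
          intro hd
          have hd' : d ≤ 2 * n + 1 := by omega
          have hk1 : 2 * n + 1 - d = (2 * n + 1 - (d + 1)) + 1 := by omega
          set k := 2 * n + 1 - (d + 1) with hkdef
          have hk2 : k ≤ 2 * n := by omega
          have hIH : J₁.1 ⊔ auxC x y n (k + 1) = J₂.1 ⊔ auxC x y n (k + 1) := by
            rw [← hk1]; exact ih hd'
          obtain ⟨hCeq, hxz, hyz⟩ := hstep k hk2
          by_cases hc : auxC x y n (k + 1) ≤ J₂.1 ⊔ auxC x y n k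
          · have hc1 : auxC x y n (k + 1) ≤ J₁.1 ⊔ auxC x y n k := (hiff k (by omega)).2 hc
            have e1 : J₁.1 ⊔ auxC x y n k = J₁.1 ⊔ auxC x y n (k + 1) :=
              le_antisymm (sup_le_sup_left (hmono k hk2) _) (sup_le le_sup_left hc1)
            have e2 : J₂.1 ⊔ auxC x y n k = J₂.1 ⊔ auxC x y n (k + 1) :=
              le_antisymm (sup_le_sup_left (hmono k hk2) _) (sup_le le_sup_left hc)
            rw [e1, e2, hIH]
          · apply le_antisymm (sup_le_sup_right hle12 _)
            refine sup_le ?_ le_sup_right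
            intro w hw
            have hw2 : w ∈ (J₁.1 ⊔ auxC x y n k) ⊔ Ideal.span {auxZ x y n k} := by
              rw [sup_assoc, ← hCeq, hIH]
              exact Submodule.mem_sup_left hw
            obtain ⟨u, hu, v, hv, huv⟩ := Submodule.mem_sup.1 hw2
            obtain ⟨a, rfl⟩ := Ideal.mem_span_singleton'.1 hv
            by_cases ha : IsUnit a
            · exfalso
              apply hc
              rw [hCeq]
              refine sup_le le_sup_right ?_
              rw [Ideal.span_le]
              rintro r (rfl : r = auxZ x y n k)
              have hv2 : a * auxZ x y n k ∈ J₂.1 ⊔ auxC x y n k := by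
                have hww : a * auxZ x y n k = w - u := by
                  rw [← huv]; ring
                rw [hww]
                exact sub_mem (Submodule.mem_sup_left hw)
                  (sup_le_sup_right hle12 _ hu)
              have hzz : auxZ x y n k = ↑ha.unit⁻¹ * (a * auxZ x y n k) := by
                rw [← mul_assoc, IsUnit.val_inv_mul, one_mul]
              rw [hzz]
              exact Ideal.mul_mem_left _ _ hv2
            · have haa : a ∈ Ideal.span ({x, y} : Set R) := by
                rw [← hm, IsLocalRing.mem_maximalIdeal]; exact ha
              obtain ⟨c, d', hcd⟩ := Ideal.mem_span_pair.1 haa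
              have hvC : a * auxZ x y n k ∈ auxC x y n k := by
                rw [← hcd, show (c * x + d' * y) * auxZ x y n k =
                  c * (x * auxZ x y n k) + d' * (y * auxZ x y n k) from by ring]
                exact add_mem (Ideal.mul_mem_left _ _ hxz) (Ideal.mul_mem_left _ _ hyz)
              rw [← huv]
              exact add_mem hu (le_sup_right (α := Ideal R) hvC)
      have hfin := main (2 * n + 1) le_rfl
      rw [Nat.sub_self] at hfin
      rw [sup_eq_left.2 J₁.2, sup_eq_left.2 J₂.2] at hfin
      exact hlt.ne (Subtype.ext hfin)
  have hφle : ∀ J, φ J ≤ 2 * n + 1 := fun J =>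
    le_trans (Finset.card_filter_le _ _) (by simp)
  have hlen : ∀ p : LTSeries {J : Ideal R // auxC x y n 0 ≤ J}, p.length ≤ 2 * n + 1 := by
    intro p
    have hsm : StrictMono (φ ∘ p.toFun) := hφmono.comp p.strictMono
    have key : ∀ i : Fin (p.length + 1), (i : ℕ) ≤ φ (p.toFun i) := by
      intro i
      induction i using Fin.induction with
      | zero => simp
      | succ i ih =>
        have hlt : φ (p.toFun i.castSucc) < φ (p.toFun i.succ) :=
          hsm (Fin.castSucc_lt_succ : i.castSucc < i.succ)
        have : (i.castSucc : ℕ) = (i : ℕ) := rfl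
        simp only [Fin.val_succ]
        omega
    have := key (Fin.last _)
    simp only [Fin.val_last] at this
    exact this.trans (hφle _)
  have hne : Nonempty {J : Ideal R // auxC x y n 0 ≤ J} := ⟨⟨⊤, le_top⟩⟩
  apply le_antisymm
  · rw [Order.krullDim_eq_iSup_length]
    refine WithBot.coe_le_coe.2 (iSup_le fun p => ?_)
    exact_mod_cast hlen p
  · have := Order.LTSeries.length_le_krullDim lb
    exact_mod_cast this

end Aux4

section MainAux

variable {R : Type u} [CommRing R] [IsLocalRing R]

lemma aux_pow (x y : R) (hxy : x * y = 0) (k : ℕ) :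
    (Ideal.span {x, y}) ^ (k + 1) = Ideal.span {x ^ (k + 1), y ^ (k + 1)} := by
  induction k with
  | zero => simp
  | succ k ih =>
    rw [pow_succ, ih, Ideal.span_pair_mul_span_pair]
    have h1 : x ^ (k + 1) * y = 0 := by
      calc x ^ (k + 1) * y = x ^ k * (x * y) := by ring
      _ = 0 := by rw [hxy, mul_zero]
    have h2 : y ^ (k + 1) * x = 0 := by
      calc y ^ (k + 1) * x = y ^ k * (x * y) := by ring
      _ = 0 := by rw [hxy, mul_zero]
    rw [h1, h2, ← pow_succ, ← pow_succ]
    apply le_antisymm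
    · rw [Ideal.span_le]
      intro r hr
      simp only [Set.mem_insert_iff, Set.mem_singleton_iff] at hr
      rcases hr with rfl | rfl | rfl | rfl
      · exact Ideal.subset_span (by simp)
      · exact zero_mem _
      · exact zero_mem _
      · exact Ideal.subset_span (by simp)
    · rw [Ideal.span_le]
      intro r hr
      simp only [Set.mem_insert_iff, Set.mem_singleton_iff] at hr
      rcases hr with rfl | rfl
      · exact Ideal.subset_span (by simp)
      · exact Ideal.subset_span (by simp)

lemma aux_principal_regular (hnoeth : IsNoetherianRing R) (hdim : ringKrullDim R = 1)
    (g : R) (hg : maximalIdeal R = Ideal.span {g}) : IsRegularLocalRing' R := by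
  refine ⟨inferInstance, hnoeth, 1, fun _ => g, ?_, ?_, ?_⟩
  · rw [hdim]; simp
  · intro _
    have hgm : g ∈ maximalIdeal R := hg ▸ Ideal.mem_span_singleton_self g
    exact (IsLocalRing.mem_maximalIdeal g).1 hgm
  · intro a ha
    have hr : Set.range (fun _ : Fin 1 => g) = {g} := Set.range_const
    rw [hr, ← hg]
    exact (IsLocalRing.mem_maximalIdeal a).2 ha

lemma aux_moduleLength (x y : R) (hx : x ∈ maximalIdeal R) (hy : y ∈ maximalIdeal R)
    (hm : maximalIdeal R = Ideal.span {x, y}) (hxy : x * y = 0)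
    (hmeet : Ideal.span {x} ⊓ Ideal.span {y} = ⊥)
    (hxpow : ∀ i : ℕ, x ^ (i + 1) ≠ 0) (hypow : ∀ j : ℕ, y ^ (j + 1) ≠ 0)
    (n : ℕ) :
    moduleLength R (R ⧸ ((maximalIdeal R ^ (n + 1)) • (⊤ : Submodule R R))) = 2 * n + 1 := by
  have hsm : ((maximalIdeal R ^ (n + 1)) • (⊤ : Submodule R R))
      = (maximalIdeal R ^ (n + 1) : Ideal R) := by
    rw [smul_eq_mul, Ideal.mul_top]
  have hC0 : (maximalIdeal R ^ (n + 1) : Ideal R) = auxC x y n 0 := by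
    have e : auxC x y n 0 = Ideal.span {x ^ (n + 1), y ^ (n + 1)} := by
      rw [auxC]; norm_num
    rw [e, hm]; exact aux_pow x y hxy n
  have hk := aux_krullDim x y hx hy hm hxy hmeet hxpow hypow n
  have hiso := Order.krullDim_eq_of_orderIso
    (Submodule.comapMkQRelIso ((maximalIdeal R ^ (n + 1)) • (⊤ : Submodule R R)))
  have hkrull : Order.krullDim
      (Submodule R (R ⧸ ((maximalIdeal R ^ (n + 1)) • (⊤ : Submodule R R))))
      = ((2 * n + 1 : ℕ) : WithBot ℕ∞) := by
    rw [hiso, hsm, hC0]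
    exact hk
  rw [moduleLength, hkrull]
  have e2 : ((2 * n + 1 : ℕ) : WithBot ℕ∞) = (((2 * n + 1 : ℕ) : ℕ∞) : WithBot ℕ∞) := by
    norm_cast
  rw [e2, WithBot.unbotD_coe, ENat.toNat_coe]

end MainAux

universe u

theorem square_of_maximalIdeal {R : Type u} [CommRing R] [IsLocalRing R]
    (hGor : IsGorensteinLocalRing R) (hdim : ringKrullDim R = 1)
    (hres : Infinite (ResidueField R)) (hnotreg : ¬IsRegularLocalRing' R)
    (x y : R) (hx : x ∈ maximalIdeal R) (hy : y ∈ maximalIdeal R)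
    (hxy : x * y = 0) (hmeet : Ideal.span {x} ⊓ Ideal.span {y} = ⊥)
    (hjoin : Ideal.span {x} ⊔ Ideal.span {y} = maximalIdeal R) :
    maximalIdeal R ^ 2 = Ideal.span {x ^ 2, y ^ 2} ∧
    maximalIdeal R ^ 2 = Ideal.span {x + y} * maximalIdeal R ∧
    muIdeal (maximalIdeal R) = 2 ∧
    HasHSMultiplicity R (maximalIdeal R) R 1 2 := by
  classical
  obtain ⟨_, hnoeth, n0, xs, hd0, hnu, hreg, -⟩ := hGor
  have hn1 : n0 = 1 := by
    have hn0 : (n0 : WithBot ℕ∞) = ((1 : ℕ) : WithBot ℕ∞) := by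
      rw [← hd0, hdim]; simp
    exact_mod_cast hn0
  subst hn1
  have hofn : List.ofFn xs = [xs 0] := by
    simp [List.ofFn_succ]
  have hsreg : IsSMulRegular R (xs 0) := by
    have h := hreg.toIsWeaklyRegular
    rw [hofn, RingTheory.Sequence.isWeaklyRegular_singleton_iff] at h
    exact h
  have ht₀ : ∀ a : R, a * xs 0 = 0 → a = 0 := by
    intro a ha
    have h : xs 0 • a = xs 0 • (0 : R) := by
      rw [smul_eq_mul, smul_eq_mul, mul_zero, mul_comm]
      exact ha
    exact hsreg h
  have ht₀m : xs 0 ∈ maximalIdeal R := (IsLocalRing.mem_maximalIdeal _).2 (hnu 0)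
  have hm : maximalIdeal R = Ideal.span {x, y} := by
    rw [← hjoin, ← Ideal.span_union, Set.singleton_union]
  have Hprin : ∀ g : R, maximalIdeal R ≠ Ideal.span {g} := fun g hg =>
    hnotreg (aux_principal_regular hnoeth hdim g hg)
  have ht : ∀ a : R, a * (x + y) = 0 → a = 0 := by
    intro a ha
    have hax : a * x ∈ Ideal.span {x} ⊓ Ideal.span {y} := by
      constructor
      · exact Ideal.mem_span_singleton.2 ⟨a, mul_comm a x⟩
      · have hh : a * x = -(a * y) := by linear_combination ha
        rw [hh]
        exact neg_mem (Ideal.mem_span_singleton.2 ⟨a, mul_comm a y⟩)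
    rw [hmeet, Ideal.mem_bot] at hax
    have hay : a * y = 0 := by linear_combination ha - hax
    have htm : xs 0 ∈ Ideal.span ({x, y} : Set R) := hm ▸ ht₀m
    obtain ⟨c, d, hcd⟩ := Ideal.mem_span_pair.1 htm
    apply ht₀ a
    calc a * xs 0 = c * (a * x) + d * (a * y) := by rw [← hcd]; ring
    _ = 0 := by rw [hax, hay]; ring
  have hx0 : x ≠ 0 := by
    intro h
    apply Hprin y
    rw [hm, h]
    exact Submodule.span_insert_zero
  have hy0 : y ≠ 0 := by
    intro h
    apply Hprin x
    rw [hm, h, Ideal.span_pair_comm]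
    exact Submodule.span_insert_zero
  have hcancel : ∀ j (a : R), a * (x + y) ^ j = 0 → a = 0 := by
    intro j
    induction j with
    | zero => intro a ha; simpa using ha
    | succ j ih =>
      intro a ha
      exact ht a (ih (a * (x + y)) (by rw [← ha]; ring))
  have hxpow : ∀ i : ℕ, x ^ (i + 1) ≠ 0 := by
    have hxt : ∀ i : ℕ, x * (x + y) ^ i = x ^ (i + 1) := by
      intro i
      induction i with
      | zero => simp
      | succ i ih =>
        calc x * (x + y) ^ (i + 1) = (x * (x + y)) * (x + y) ^ i := by ring
        _ = (x * x) * (x + y) ^ i := by rw [mul_add, hxy, add_zero]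
        _ = x * (x * (x + y) ^ i) := by ring
        _ = x * x ^ (i + 1) := by rw [ih]
        _ = x ^ (i + 2) := by ring
    intro i hzero
    exact hx0 (hcancel i x (by rw [hxt i]; exact hzero))
  have hypow : ∀ j : ℕ, y ^ (j + 1) ≠ 0 := by
    have hyt : ∀ i : ℕ, y * (x + y) ^ i = y ^ (i + 1) := by
      intro i
      induction i with
      | zero => simp
      | succ i ih =>
        calc y * (x + y) ^ (i + 1) = (y * (x + y)) * (x + y) ^ i := by ring
        _ = (y * y) * (x + y) ^ i := by
          rw [mul_add, mul_comm y x, hxy, zero_add]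
        _ = y * (y * (x + y) ^ i) := by ring
        _ = y * y ^ (i + 1) := by rw [ih]
        _ = y ^ (i + 2) := by ring
    intro j hzero
    exact hy0 (hcancel j y (by rw [hyt j]; exact hzero))
  have hpow : ∀ k : ℕ, maximalIdeal R ^ (k + 1) = Ideal.span {x ^ (k + 1), y ^ (k + 1)} := by
    intro k
    rw [hm]
    exact aux_pow x y hxy k
  have goal1 : maximalIdeal R ^ 2 = Ideal.span {x ^ 2, y ^ 2} := by
    have h1 := hpow 1
    norm_num at h1
    exact h1
  refine ⟨goal1, ?_, ?_, ?_⟩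
  · -- 𝔪² = (x+y)𝔪
    conv_rhs => rw [hm]
    rw [show (Ideal.span {x + y} : Ideal R) = Ideal.span {x + y, x + y} from by
      rw [Set.pair_eq_singleton]]
    rw [Ideal.span_pair_mul_span_pair]
    have e1 : (x + y) * x = x ^ 2 := by linear_combination hxy
    have e2 : (x + y) * y = y ^ 2 := by linear_combination hxy
    rw [e1, e2]
    rw [show ({x ^ 2, y ^ 2, x ^ 2, y ^ 2} : Set R) = {x ^ 2, y ^ 2} from by
      ext r; simp [or_comm, or_assoc, or_left_comm]]
    exact goal1
  · -- embedding dimension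
    have hxny : x ≠ y := by
      intro h
      apply Hprin x
      rw [hm, ← h, Set.pair_eq_singleton]
    have h2mem : 2 ∈ {n | ∃ s : Finset R, s.card = n ∧ Ideal.span (s : Set R) = maximalIdeal R} := by
      refine ⟨{x, y}, ?_, ?_⟩
      · rw [Finset.card_insert_of_notMem (by simpa using hxny), Finset.card_singleton]
      · rw [show ((({x, y} : Finset R) : Set R)) = ({x, y} : Set R) from by simp, ← hm]
    have hne : {n | ∃ s : Finset R, s.card = n ∧ Ideal.span (s : Set R) = maximalIdeal R}.Nonempty :=
      ⟨2, h2mem⟩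
    have hge : 2 ≤ sInf {n | ∃ s : Finset R, s.card = n ∧ Ideal.span (s : Set R) = maximalIdeal R} := by
      by_contra hlt
      push_neg at hlt
      obtain ⟨s, hcard, hspan⟩ := Nat.sInf_mem hne
      rw [← hcard] at hlt
      have h2 : s.card = 0 ∨ s.card = 1 := by omega
      rcases h2 with h2 | h2
      · rw [Finset.card_eq_zero.1 h2] at hspan
        simp only [Finset.coe_empty, Ideal.span_empty] at hspan
        exact Hprin 0 (by rw [← hspan]; exact (Submodule.span_zero_singleton R).symm)
      · obtain ⟨g, rfl⟩ := Finset.card_eq_one.1 h2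
        simp only [Finset.coe_singleton] at hspan
        exact Hprin g hspan.symm
    rw [muIdeal]
    exact le_antisymm (Nat.sInf_le h2mem) hge
  · -- multiplicity
    rw [HasHSMultiplicity]
    have hlen : ∀ n : ℕ,
        (moduleLength R (R ⧸ ((maximalIdeal R ^ (n + 1)) • (⊤ : Submodule R R))) : ℝ)
          = 2 * n + 1 := by
      intro n
      rw [aux_moduleLength x y hx hy hm hxy hmeet hxpow hypow n]
      push_cast
      ring
    have h1 : Tendsto (fun n : ℕ => (2 : ℝ) + 1 / (n : ℝ)) atTop (nhds ((2 : ℕ) : ℝ)) := by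
      have h2 := (tendsto_const_nhds (x := (2 : ℝ)) (f := atTop)).add
        tendsto_one_div_atTop_nhds_zero_nat
      simpa using h2
    refine Tendsto.congr' ?_ h1
    filter_upwards [eventually_ge_atTop 1] with n hn
    have hnn : (n : ℝ) ≠ 0 := by positivity
    rw [hlen n]
    simp only [Nat.factorial_one, Nat.cast_one, pow_one, one_mul]
    field_simp
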